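/- Exactly one element of the multiset A_n has empty descent set, and exactly (n-1)! elements of A_n have descent set equal to {1,...,n-2}. -/

import Mathlib

/-- Cartesian product of a list of multisets, as a multiset of lists. -/
def multisetProd : List (Multiset ℕ) → Multiset (List ℕ)
  | [] => {[]}
  | m :: ms => m.bind fun a => (multisetProd ms).map (a :: ·)

/-- The `k`-th factor of `A_n`: the multiset with `k+1-i` copies of `i` for `1 ≤ i ≤ k`. -/
def factorA (k : ℕ) : Multiset ℕ :=
  (Finset.Icc 1 k).sum fun i => Multiset.replicate (k + 1 - i) i

/-- The multiset `A_n`, product of `factorA 1, …, factorA (n-1)`. -/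
def An (n : ℕ) : Multiset (List ℕ) :=
  multisetProd ((List.range (n - 1)).map fun k => factorA (k + 1))

/-- The descent set of `σ = (σ_1,…,σ_m)`: indices (0-indexed `j`, corresponding to
the 1-indexed descent `j+1 ∈ [m-1]`) with `σ_{j+1} ≥ σ_{j+2}`. -/
def desSet (σ : List ℕ) : Finset ℕ :=
  (Finset.range (σ.length - 1)).filter fun j => σ.getD (j + 1) 0 ≤ σ.getD j 0

lemma mem_factorA {k a : ℕ} : a ∈ factorA k ↔ 1 ≤ a ∧ a ≤ k := by
  simp only [factorA, Multiset.mem_sum, Multiset.mem_replicate, Finset.mem_Icc]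
  constructor
  · rintro ⟨i, ⟨h1, h2⟩, -, rfl⟩; exact ⟨h1, h2⟩
  · rintro ⟨h1, h2⟩; exact ⟨a, ⟨h1, h2⟩, by omega, rfl⟩

lemma count_factorA {k a : ℕ} (h1 : 1 ≤ a) (h2 : a ≤ k) :
    (factorA k).count a = k + 1 - a := by
  rw [factorA, Multiset.count_sum']
  rw [Finset.sum_eq_single a]
  · simp [Multiset.count_replicate]
  · intro b _ hb; simp only [Multiset.count_replicate]; simp [hb]
  · intro h; exact absurd (Finset.mem_Icc.2 ⟨h1, h2⟩) h

lemma multiset_filter_bind (s : Multiset ℕ) (f : ℕ → Multiset (List ℕ))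
    (p : List ℕ → Prop) [DecidablePred p] :
    (s.bind f).filter p = s.bind fun a => (f a).filter p := by
  induction s using Multiset.induction with
  | empty => simp
  | cons a s ih => simp [Multiset.cons_bind, Multiset.filter_add, ih]

lemma multiset_sum_map_ite (m : Multiset ℕ) (t X : ℕ) :
    (m.map fun a => if a = t then X else 0).sum = m.count t * X := by
  induction m using Multiset.induction with
  | empty => simp
  | cons a s ih =>
      simp only [Multiset.map_cons, Multiset.sum_cons, Multiset.count_cons, ih]
      split
      · simp_all; ring
      · rename_i h; simp [if_neg (Ne.symm h)]

/-- product of factors `factorA c, factorA (c+1), …, factorA (c+m-1)` -/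
def Fm (m c : ℕ) : Multiset (List ℕ) :=
  multisetProd ((List.range m).map fun k => factorA (c + k))

lemma Fm_succ (m c : ℕ) :
    Fm (m + 1) c = (factorA c).bind fun a => (Fm m (c + 1)).map (a :: ·) := by
  have : (List.range (m + 1)).map (fun k => factorA (c + k)) =
      factorA c :: (List.range m).map fun k => factorA (c + 1 + k) := by
    simp only [List.range_succ_eq_map, List.map_cons, List.map_map, Nat.add_zero]
    congr 1
    apply List.map_congr_left
    intro k _
    simp only [Function.comp_apply]
    congr 1; omega
  rw [Fm, this, multisetProd]
  rfl

lemma range_map_prod_succ (m c : ℕ) :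
    ((List.range (m + 1)).map fun k => c + k).prod =
      c * ((List.range m).map fun k => (c + 1) + k).prod := by
  rw [List.range_succ_eq_map, List.map_cons, List.map_map]
  simp only [List.prod_cons, Nat.add_zero]
  congr 2
  apply List.map_congr_left
  intro k _
  simp only [Function.comp_apply]
  omega

lemma card_filter_dec (m : ℕ) : ∀ c, 1 ≤ c →
    Multiset.card ((Fm m c).filter fun σ => List.IsChain (fun a b => b ≤ a) (1 :: σ)) =
      ((List.range m).map fun k => c + k).prod := by
  induction m with
  | zero => intro c _; simp [Fm, multisetProd, Multiset.filter_singleton, List.isChain_singleton]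
  | succ m ih =>
      intro c hc
      rw [Fm_succ, multiset_filter_bind, Multiset.card_bind, range_map_prod_succ]
      set X : ℕ := Multiset.card
        ((Fm m (c + 1)).filter fun σ => List.IsChain (fun a b => b ≤ a) (1 :: σ)) with hX
      have key : ((factorA c).map
          (Multiset.card ∘ fun a =>
            (((Fm m (c + 1)).map (a :: ·)).filter
              fun σ => List.IsChain (fun a b => b ≤ a) (1 :: σ)))) =
          (factorA c).map fun a => if a = 1 then X else 0 := by
        apply Multiset.map_congr rfl
        intro a ha
        have ha1 : 1 ≤ a := (mem_factorA.1 ha).1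
        simp only [Function.comp_apply, Multiset.filter_map, Multiset.card_map]
        by_cases h1 : a = 1
        · subst h1
          rw [if_pos rfl, hX]
          congr 1
          apply Multiset.filter_congr
          intro σ _
          simp only [Function.comp_apply, List.isChain_cons_cons]
          tauto
        · rw [if_neg h1]
          rw [Multiset.filter_eq_nil.2, Multiset.card_zero]
          intro σ _
          simp only [Function.comp_apply, List.isChain_cons_cons]
          intro hcon
          omega
      rw [key, multiset_sum_map_ite, count_factorA (le_refl 1) hc, hX,
        ih (c + 1) (by omega)]
      congr 1

lemma card_filter_inc (m : ℕ) : ∀ c, 1 ≤ c →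
    Multiset.card ((Fm m c).filter fun σ => List.IsChain (· < ·) ((c - 1) :: σ)) = 1 := by
  induction m with
  | zero => intro c _; simp [Fm, multisetProd, Multiset.filter_singleton, List.isChain_singleton]
  | succ m ih =>
      intro c hc
      rw [Fm_succ, multiset_filter_bind, Multiset.card_bind]
      set X : ℕ := Multiset.card
        ((Fm m (c + 1)).filter fun σ => List.IsChain (· < ·) (c :: σ)) with hX
      have key : ((factorA c).map
          (Multiset.card ∘ fun a =>
            (((Fm m (c + 1)).map (a :: ·)).filter
              fun σ => List.IsChain (· < ·) ((c - 1) :: σ)))) =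
          (factorA c).map fun a => if a = c then X else 0 := by
        apply Multiset.map_congr rfl
        intro a ha
        have ha1 : 1 ≤ a ∧ a ≤ c := mem_factorA.1 ha
        simp only [Function.comp_apply, Multiset.filter_map, Multiset.card_map]
        by_cases h1 : a = c
        · subst h1
          rw [if_pos rfl, hX]
          congr 1
          apply Multiset.filter_congr
          intro σ _
          simp only [Function.comp_apply, List.isChain_cons_cons]
          constructor
          · tauto
          · intro h; exact ⟨by omega, h⟩
        · rw [if_neg h1]
          rw [Multiset.filter_eq_nil.2, Multiset.card_zero]
          intro σ _
          simp only [Function.comp_apply, List.isChain_cons_cons]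
          intro hcon
          omega
      rw [key, multiset_sum_map_ite, count_factorA hc (le_refl c)]
      have : X = 1 := by
        rw [hX]
        have := ih (c + 1) (by omega)
        simpa using this
      rw [this]
      omega

lemma desSet_empty_iff (σ : List ℕ) : desSet σ = ∅ ↔ List.IsChain (· < ·) σ := by
  rw [desSet, Finset.filter_eq_empty_iff, List.isChain_iff_getElem]
  constructor
  · intro h i hi
    have h2 := h (x := i) (Finset.mem_range.mpr (by omega))
    rw [List.getD_eq_getElem σ 0 (show i + 1 < σ.length by omega),
        List.getD_eq_getElem σ 0 (show i < σ.length by omega)] at h2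
    simpa [List.get_eq_getElem] using not_le.mp h2
  · intro h j hj
    rw [Finset.mem_range] at hj
    have h2 := h j (by omega)
    rw [List.getD_eq_getElem σ 0 (show j + 1 < σ.length by omega),
        List.getD_eq_getElem σ 0 (show j < σ.length by omega)]
    omega

lemma desSet_full_iff (σ : List ℕ) :
    desSet σ = Finset.range (σ.length - 1) ↔ List.IsChain (fun a b => b ≤ a) σ := by
  rw [desSet, Finset.filter_eq_self, List.isChain_iff_getElem]
  constructor
  · intro h i hi
    have h2 := h i (Finset.mem_range.mpr (by omega))
    rw [List.getD_eq_getElem σ 0 (show i + 1 < σ.length by omega),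
        List.getD_eq_getElem σ 0 (show i < σ.length by omega)] at h2
    simpa [List.get_eq_getElem] using h2
  · intro h j hj
    rw [Finset.mem_range] at hj
    have h2 := h j (by omega)
    rw [List.getD_eq_getElem σ 0 (show j + 1 < σ.length by omega),
        List.getD_eq_getElem σ 0 (show j < σ.length by omega)]
    exact h2

lemma length_of_mem_multisetProd : ∀ {L : List (Multiset ℕ)} {σ : List ℕ},
    σ ∈ multisetProd L → σ.length = L.length := by
  intro L
  induction L with
  | nil => intro σ h; simp [multisetProd] at h; simp [h]
  | cons M Ms ih =>
      intro σ h
      simp only [multisetProd, Multiset.mem_bind, Multiset.mem_map] at h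
      obtain ⟨a, _, t, ht, rfl⟩ := h
      simp [ih ht]

lemma cons_of_mem_multisetProd {M : Multiset ℕ} {Ms : List (Multiset ℕ)} {σ : List ℕ}
    (h : σ ∈ multisetProd (M :: Ms)) :
    ∃ a t, σ = a :: t ∧ a ∈ M ∧ t ∈ multisetProd Ms := by
  simp only [multisetProd, Multiset.mem_bind, Multiset.mem_map] at h
  obtain ⟨a, ha, t, ht, rfl⟩ := h
  exact ⟨a, t, rfl, ha, ht⟩

lemma An_eq_Fm (n : ℕ) : An n = Fm (n - 1) 1 := by
  rw [An, Fm]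
  congr 1
  apply List.map_congr_left
  intro k _
  congr 1
  omega

/-- Exactly one element of `A_n` has empty descent set, and exactly `(n-1)!` elements
of `A_n` (counted with multiplicity) have descent set equal to `{1,…,n-2}`
(all positions). -/
theorem An_descent_extremes (n : ℕ) (hn : 2 ≤ n) :
    Multiset.card ((An n).filter fun σ => desSet σ = ∅) = 1 ∧
    Multiset.card ((An n).filter fun σ => desSet σ = Finset.range (n - 2)) =
      Nat.factorial (n - 1) := by
  have hm : 1 ≤ n - 1 := by omega
  have hhead : ∀ σ ∈ Fm (n - 1) 1, ∃ t, σ = 1 :: t := by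
    intro σ hσ
    obtain ⟨m', hm'⟩ : ∃ m', n - 1 = m' + 1 := ⟨n - 2, by omega⟩
    rw [Fm, hm', List.range_succ_eq_map, List.map_cons] at hσ
    obtain ⟨a, t, rfl, ha, -⟩ := cons_of_mem_multisetProd hσ
    have := mem_factorA.1 ha
    exact ⟨t, by simp; omega⟩
  have hlen : ∀ σ ∈ Fm (n - 1) 1, σ.length = n - 1 := by
    intro σ hσ
    have := length_of_mem_multisetProd (L := (List.range (n-1)).map fun k => factorA (1 + k)) (σ := σ) hσ
    simpa using this
  rw [An_eq_Fm]
  constructor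
  · have heq : ((Fm (n - 1) 1).filter fun σ => desSet σ = ∅) =
        (Fm (n - 1) 1).filter fun σ => List.IsChain (· < ·) ((1 - 1) :: σ) := by
      apply Multiset.filter_congr
      intro σ hσ
      obtain ⟨t, rfl⟩ := hhead σ hσ
      rw [desSet_empty_iff]
      show _ ↔ List.IsChain (· < ·) (0 :: 1 :: t)
      rw [List.isChain_cons_cons]
      simp
    rw [heq]
    exact card_filter_inc (n - 1) 1 le_rfl
  · have heq : ((Fm (n - 1) 1).filter fun σ => desSet σ = Finset.range (n - 2)) =
        (Fm (n - 1) 1).filter fun σ => List.IsChain (fun a b => b ≤ a) (1 :: σ) := by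
      apply Multiset.filter_congr
      intro σ hσ
      obtain ⟨t, rfl⟩ := hhead σ hσ
      have hl := hlen _ hσ
      have hr : Finset.range (n - 2) = Finset.range ((1 :: t).length - 1) := by
        rw [hl]; congr 1
      rw [hr, desSet_full_iff]
      show _ ↔ List.IsChain (fun a b => b ≤ a) (1 :: 1 :: t)
      rw [List.isChain_cons_cons]
      simp
    rw [heq, card_filter_dec (n - 1) 1 le_rfl]
    have : ∀ m, ((List.range m).map fun k => 1 + k).prod = Nat.factorial m := by
      intro m
      induction m with
      | zero => simp
      | succ m ih =>
          rw [List.range_succ, List.map_append, List.prod_append, ih]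
          simp [Nat.factorial_succ]
          ring
    exact this (n - 1)
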